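/- Let k ≥ 1, let u_1 ≤ … ≤ u_k and u*_1 ≤ … ≤ u*_k be real numbers with u_i ≤ u*_i for all i. Define g(u) = ∑_{j=1}^k e^{u_j} / (1 + ∑_{j=1}^k e^{u_j})². Then g(u) − g(u*) ≤ Q(u*) − Q(u), where Q(u) = ∑_{j=1}^k e^{u_j}/(1 + ∑_{j=1}^k e^{u_j}). -/
import Mathlib


open Finset

theorem stmt_18 (k : ℕ) (hk : 1 ≤ k) (u ustar : Fin k → ℝ)
    (hu : Monotone u) (hustar : Monotone ustar) (hle : ∀ i, u i ≤ ustar i) :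
    (∑ j, Real.exp (u j)) / (1 + ∑ j, Real.exp (u j)) ^ 2 -
      (∑ j, Real.exp (ustar j)) / (1 + ∑ j, Real.exp (ustar j)) ^ 2 ≤
    (∑ j, Real.exp (ustar j)) / (1 + ∑ j, Real.exp (ustar j)) -
      (∑ j, Real.exp (u j)) / (1 + ∑ j, Real.exp (u j)) := by
  set S := ∑ j, Real.exp (u j) with hS
  set T := ∑ j, Real.exp (ustar j) with hT
  have hST : S ≤ T := Finset.sum_le_sum fun i _ => Real.exp_le_exp.mpr (hle i)
  have hS0 : 0 ≤ S := Finset.sum_nonneg fun i _ => (Real.exp_pos _).le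
  have h1 : (0:ℝ) < 1 + S := by linarith
  have h2 : (0:ℝ) < 1 + T := by linarith
  rw [div_sub_div _ _ (by positivity) (by positivity), div_sub_div _ _ (ne_of_gt h2) (ne_of_gt h1),
    div_le_div_iff₀ (by positivity) (by positivity)]
  nlinarith [sq_nonneg (T - S), sq_nonneg (S*T), mul_nonneg hS0 (le_trans hS0 hST), sq_nonneg (1+S), sq_nonneg (1+T), mul_pos h1 h2, sq_nonneg ((1+S)*(1+T)), mul_nonneg (mul_nonneg hS0 (le_trans hS0 hST)) (sub_nonneg.mpr hST), mul_nonneg (sub_nonneg.mpr hST) (mul_pos h1 h2).le]
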